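/- Every two-player game whose response graph is preference-equivalent to that of a zero-sum game has exactly one sink strongly connected component in its response graph. -/

import Mathlib

/-- Profiles `p q` are 1-comparable: they differ only in player 1's strategy. -/
def Comp1 {S1 S2 : Type} (p q : S1 × S2) : Prop := p.1 ≠ q.1 ∧ p.2 = q.2

/-- Profiles `p q` are 2-comparable: they differ only in player 2's strategy. -/
def Comp2 {S1 S2 : Type} (p q : S1 × S2) : Prop := p.1 = q.1 ∧ p.2 ≠ q.2

/-- Profiles are comparable if they differ in the strategy of exactly one player. -/
def Comparable {S1 S2 : Type} (p q : S1 × S2) : Prop := Comp1 p q ∨ Comp2 p q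

/-- Arc of the response graph (weak arcs: `≥` for the deviating player). -/
def Arc {S1 S2 : Type} (u1 u2 : S1 × S2 → ℝ) (p q : S1 × S2) : Prop :=
  (Comp1 p q ∧ u1 p ≤ u1 q) ∨ (Comp2 p q ∧ u2 p ≤ u2 q)

/-- Strict arc of the response graph. -/
def SArc {S1 S2 : Type} (u1 u2 : S1 × S2 → ℝ) (p q : S1 × S2) : Prop :=
  (Comp1 p q ∧ u1 p < u1 q) ∨ (Comp2 p q ∧ u2 p < u2 q)

/-- `φ` is a potential function for the game `(v1, v2)`. -/
def IsPotential {S1 S2 : Type} (v1 v2 φ : S1 × S2 → ℝ) : Prop :=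
  (∀ p q, Comp1 p q → φ p - φ q = v1 p - v1 q) ∧
  (∀ p q, Comp2 p q → φ p - φ q = v2 p - v2 q)

/-- Strategic equivalence: equal payoff differences on comparable profiles. -/
def StratEquiv {S1 S2 : Type} (u1 u2 v1 v2 : S1 × S2 → ℝ) : Prop :=
  (∀ p q, Comp1 p q → u1 p - u1 q = v1 p - v1 q) ∧
  (∀ p q, Comp2 p q → u2 p - u2 q = v2 p - v2 q)

/-- Preference equivalence: isomorphism of response graphs. -/
def PrefEquiv {S1 S2 T1 T2 : Type} (u1 u2 : S1 × S2 → ℝ) (v1 v2 : T1 × T2 → ℝ) : Prop :=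
  ∃ e : (S1 × S2) ≃ (T1 × T2), ∀ p q, Arc u1 u2 p q ↔ Arc v1 v2 (e p) (e q)

/-- The game is preference-equivalent to a zero-sum game. -/
def PrefZeroSum {S1 S2 : Type} (u1 u2 : S1 × S2 → ℝ) : Prop :=
  ∃ (T1 T2 : Type) (v : T1 × T2 → ℝ), PrefEquiv u1 u2 v (fun p => -v p)

/-- The game is preference-equivalent to a potential game. -/
def PrefPotential {S1 S2 : Type} (u1 u2 : S1 × S2 → ℝ) : Prop :=
  ∃ (T1 T2 : Type) (v1 v2 φ : T1 × T2 → ℝ), IsPotential v1 v2 φ ∧ PrefEquiv u1 u2 v1 v2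

/-- Reachability in the response graph. -/
def Reach {S1 S2 : Type} (u1 u2 : S1 × S2 → ℝ) : S1 × S2 → S1 × S2 → Prop :=
  Relation.ReflTransGen (Arc u1 u2)

/-- `p` lies in a sink strongly connected component of the response graph. -/
def InSink {S1 S2 : Type} (u1 u2 : S1 × S2 → ℝ) (p : S1 × S2) : Prop :=
  ∀ q, Reach u1 u2 p q → Reach u1 u2 q p

/-- Genericity: no player is ever indifferent between comparable profiles. -/
def Generic {S1 S2 : Type} (u1 u2 : S1 × S2 → ℝ) : Prop :=
  (∀ p q, Comp1 p q → u1 p ≠ u1 q) ∧ (∀ p q, Comp2 p q → u2 p ≠ u2 q)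

/-- Pure Nash equilibrium. -/
def IsPNE {S1 S2 : Type} (u1 u2 : S1 × S2 → ℝ) (p : S1 × S2) : Prop :=
  (∀ t, u1 (t, p.2) ≤ u1 p) ∧ (∀ t, u2 (p.1, t) ≤ u2 p)

lemma zs_arc1 {T1 T2 : Type} (v : T1 × T2 → ℝ) {a c : T1} (b : T2) (h : a ≠ c)
    (hle : v (a, b) ≤ v (c, b)) : Arc v (fun p => -v p) (a, b) (c, b) :=
  Or.inl ⟨⟨h, rfl⟩, hle⟩

lemma zs_arc2 {T1 T2 : Type} (v : T1 × T2 → ℝ) (a : T1) {b d : T2} (h : b ≠ d)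
    (hle : v (a, d) ≤ v (a, b)) : Arc v (fun p => -v p) (a, b) (a, d) :=
  Or.inr ⟨⟨rfl, h⟩, by simpa using hle⟩

/-- Confluence of the zero-sum response graph. -/
lemma zs_confluent {T1 T2 : Type} (v : T1 × T2 → ℝ) (p q : T1 × T2) :
    ∃ r, Reach v (fun x => -v x) p r ∧ Reach v (fun x => -v x) q r := by
  obtain ⟨a, b⟩ := p; obtain ⟨c, d⟩ := q
  by_cases hac : a = c
  · subst hac
    by_cases hbd : b = d
    · subst hbd; exact ⟨(a, b), .refl, .refl⟩
    · rcases le_total (v (a, d)) (v (a, b)) with h | h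
      · exact ⟨(a, d), .single (zs_arc2 v a hbd h), .refl⟩
      · exact ⟨(a, b), .refl, .single (zs_arc2 v a (Ne.symm hbd) h)⟩
  · by_cases hbd : b = d
    · subst hbd
      rcases le_total (v (a, b)) (v (c, b)) with h | h
      · exact ⟨(c, b), .single (zs_arc1 v b hac h), .refl⟩
      · exact ⟨(a, b), .refl, .single (zs_arc1 v b (Ne.symm hac) h)⟩
    · rcases le_total (v (a, b)) (v (c, b)) with h1 | h1
      · rcases le_total (v (c, d)) (v (c, b)) with h2 | h2
        · exact ⟨(c, d), .tail (.single (zs_arc1 v b hac h1)) (zs_arc2 v c hbd h2), .refl⟩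
        · exact ⟨(c, b), .single (zs_arc1 v b hac h1),
            .single (zs_arc2 v c (Ne.symm hbd) h2)⟩
      · rcases le_total (v (a, d)) (v (a, b)) with h2 | h2
        · rcases le_total (v (c, d)) (v (a, d)) with h3 | h3
          · exact ⟨(a, d), .single (zs_arc2 v a hbd h2),
              .single (zs_arc1 v d (Ne.symm hac) h3)⟩
          · exact ⟨(c, d), .tail (.single (zs_arc2 v a hbd h2)) (zs_arc1 v d hac h3), .refl⟩
        · rcases le_total (v (c, b)) (v (c, d)) with h3 | h3
          · exact ⟨(a, b), .refl,
              .tail (.single (zs_arc2 v c (Ne.symm hbd) h3)) (zs_arc1 v b (Ne.symm hac) h1)⟩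
          · exact ⟨(a, b), .refl,
              .tail (.single (zs_arc1 v d (Ne.symm hac) (h3.trans (h1.trans h2))))
                (zs_arc2 v a (Ne.symm hbd) h2)⟩

/-- Every finite response graph has a sink component. -/
lemma exists_sink {S1 S2 : Type} [Fintype S1] [Fintype S2] [Nonempty S1] [Nonempty S2]
    (u1 u2 : S1 × S2 → ℝ) : ∃ p, InSink u1 u2 p := by
  classical
  set f : S1 × S2 → ℕ :=
    fun p => (Finset.univ.filter (fun r => Reach u1 u2 p r)).card with hf
  obtain ⟨p, -, hp⟩ :=
    Finset.exists_min_image Finset.univ f ⟨Classical.arbitrary _, Finset.mem_univ _⟩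
  refine ⟨p, fun q hq => ?_⟩
  have hsub : (Finset.univ.filter (fun r => Reach u1 u2 q r)) ⊆
      (Finset.univ.filter (fun r => Reach u1 u2 p r)) := by
    intro r hr
    simp only [Finset.mem_filter, Finset.mem_univ, true_and] at hr ⊢
    exact hq.trans hr
  have heq := Finset.eq_of_subset_of_card_le hsub (hp q (Finset.mem_univ q))
  have hp' : p ∈ Finset.univ.filter (fun r => Reach u1 u2 p r) := by
    simp only [Finset.mem_filter, Finset.mem_univ, true_and]
    exact Relation.ReflTransGen.refl
  rw [← heq] at hp'
  simpa using hp'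

/-- every preference-zero-sum game has exactly one sink strongly
connected component. -/
theorem pref_zero_sum_unique_sink {S1 S2 : Type} [Fintype S1] [Fintype S2]
    [Nonempty S1] [Nonempty S2] (u1 u2 : S1 × S2 → ℝ)
    (hzs : PrefZeroSum u1 u2) :
    (∃ p, InSink u1 u2 p) ∧
      ∀ p q, InSink u1 u2 p → InSink u1 u2 q → Reach u1 u2 p q := by
  obtain ⟨T1, T2, v, e, he⟩ := hzs
  have back : ∀ x y, Reach v (fun p => -v p) x y → Reach u1 u2 (e.symm x) (e.symm y) := by
    intro x y hxy
    refine Relation.ReflTransGen.lift e.symm (fun a b hab => ?_) _ _ hxy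
    exact (he (e.symm a) (e.symm b)).mpr (by simpa using hab)
  have conf : ∀ p q, ∃ r, Reach u1 u2 p r ∧ Reach u1 u2 q r := by
    intro p q
    obtain ⟨r', h1, h2⟩ := zs_confluent v (e p) (e q)
    refine ⟨e.symm r', ?_, ?_⟩
    · have := back _ _ h1; simpa using this
    · have := back _ _ h2; simpa using this
  refine ⟨exists_sink u1 u2, fun p q _ hq => ?_⟩
  obtain ⟨r, h1, h2⟩ := conf p q
  exact h1.trans (hq r h2)
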